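/- Let L ≥ 0 and n ≥ 1, and let A_0, A_1, …, A_L ∈ ℝ^{n×n} be entrywise nonnegative matrices. Let 𝒜 ∈ ℝ^{n(L+1)×n(L+1)} be the associated delay block matrix. Then ρ(𝒜) < 1 if and only if ρ(∑_{ℓ=0}^L A_ℓ) < 1. -/

import Mathlib

open Matrix BigOperators
open scoped ENNReal

/-- The spectral radius of a real square matrix: the maximum modulus of its
complex eigenvalues. -/
noncomputable def specRad {m : Type*} [Fintype m] [DecidableEq m]
    (A : Matrix m m ℝ) : ℝ :=
  (spectralRadius ℂ (A.map (algebraMap ℝ ℂ))).toReal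

/-- The delay block matrix associated to matrices `A 0, …, A L`: first block row
`(A 0  A 1 ⋯ A L)`, identity matrices on the block subdiagonal, zeros elsewhere. -/
def delayBlock {n L : ℕ} (A : Fin (L + 1) → Matrix (Fin n) (Fin n) ℝ) :
    Matrix (Fin n × Fin (L + 1)) (Fin n × Fin (L + 1)) ℝ :=
  fun p q =>
    if (p.2 : ℕ) = 0 then A q.2 p.1 q.1
    else if p.1 = q.1 ∧ (q.2 : ℕ) + 1 = (p.2 : ℕ) then 1 else 0

namespace SpecRadAux

attribute [local instance] Matrix.linftyOpNormedRing Matrix.linftyOpNormedAlgebra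

set_option linter.unusedSectionVars false

variable {m : Type*} [Fintype m] [DecidableEq m] [Nonempty m]

lemma map_pow' (B : Matrix m m ℝ) (k : ℕ) :
    (B ^ k).map (algebraMap ℝ ℂ) = (B.map (algebraMap ℝ ℂ)) ^ k := by
  simpa using map_pow (algebraMap ℝ ℂ).mapMatrix B k

lemma pow_entry_nonneg {B : Matrix m m ℝ} (hB : ∀ i j, 0 ≤ B i j) :
    ∀ k i j, 0 ≤ (B ^ k) i j := by
  intro k
  induction k with
  | zero =>
    intro i j
    rw [pow_zero]
    by_cases h : i = j <;> simp [Matrix.one_apply, h]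
  | succ r ih =>
    intro i j
    rw [pow_succ, Matrix.mul_apply]
    exact Finset.sum_nonneg fun l _ => mul_nonneg (ih i l) (hB l j)

lemma specRad_le_of_mulVec_le {B : Matrix m m ℝ} (hB : ∀ i j, 0 ≤ B i j)
    {v : m → ℝ} (hv : ∀ i, 0 < v i)
    {c : ℝ} (hc : 0 ≤ c) (h : ∀ i, (B *ᵥ v) i ≤ c * v i) : specRad B ≤ c := by
  set M : Matrix m m ℂ := B.map (algebraMap ℝ ℂ) with hM
  have hv0 : ∀ i, (v i : ℂ) ≠ 0 := fun i => by exact_mod_cast (hv i).ne'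
  set D : Matrix m m ℂ := diagonal (fun i => (v i : ℂ)) with hD
  set E : Matrix m m ℂ := diagonal (fun i => ((v i : ℂ))⁻¹) with hE
  have hDE : D * E = 1 := by
    rw [hD, hE, diagonal_mul_diagonal,
      show (fun i => (v i : ℂ) * ((v i : ℂ))⁻¹) = fun _ => (1 : ℂ) from
        funext fun i => mul_inv_cancel₀ (hv0 i), diagonal_one]
  have hED : E * D = 1 := by
    rw [hD, hE, diagonal_mul_diagonal,
      show (fun i => ((v i : ℂ))⁻¹ * (v i : ℂ)) = fun _ => (1 : ℂ) from
        funext fun i => inv_mul_cancel₀ (hv0 i), diagonal_one]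
  set u : (Matrix m m ℂ)ˣ := ⟨D, E, hDE, hED⟩ with hu
  set X : Matrix m m ℂ := (↑u⁻¹ : Matrix m m ℂ) * M * (↑u : Matrix m m ℂ) with hX
  have hspec : spectrum ℂ X = spectrum ℂ M := spectrum.units_conjugate'
  have hrad : spectralRadius ℂ M = spectralRadius ℂ X := by
    unfold spectralRadius; rw [hspec]
  have hXEMD : X = E * M * D := rfl
  have hentry : ∀ i j, X i j = (((v i)⁻¹ * B i j * v j : ℝ) : ℂ) := by
    intro i j
    rw [hXEMD, hE, hD, Matrix.mul_diagonal, Matrix.diagonal_mul]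
    simp only [hM, Matrix.map_apply, Complex.coe_algebraMap]
    push_cast
    ring
  have hnorm : ‖X‖₊ ≤ c.toNNReal := by
    rw [Matrix.linfty_opNNNorm_def]
    refine Finset.sup_le fun i _ => ?_
    rw [← NNReal.coe_le_coe]
    push_cast
    have hsum : ∑ j, ‖X i j‖ = (v i)⁻¹ * ((B *ᵥ v) i) := by
      rw [Matrix.mulVec, dotProduct, Finset.mul_sum]
      refine Finset.sum_congr rfl fun j _ => ?_
      rw [hentry i j, Complex.norm_real, Real.norm_eq_abs,
        abs_of_nonneg (mul_nonneg (mul_nonneg (inv_nonneg.mpr (hv i).le) (hB i j)) (hv j).le),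
        mul_assoc]
    rw [hsum, Real.coe_toNNReal c hc]
    calc (v i)⁻¹ * (B *ᵥ v) i ≤ (v i)⁻¹ * (c * v i) :=
          mul_le_mul_of_nonneg_left (h i) (inv_nonneg.mpr (hv i).le)
      _ = c := by rw [mul_comm c, ← mul_assoc, inv_mul_cancel₀ (hv i).ne', one_mul]
  have hle : spectralRadius ℂ M ≤ (c.toNNReal : ℝ≥0∞) := by
    rw [hrad]
    exact (spectrum.spectralRadius_le_nnnorm (𝕜 := ℂ) X).trans (ENNReal.coe_le_coe.mpr hnorm)
  calc specRad B = (spectralRadius ℂ M).toReal := rfl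
    _ ≤ ((c.toNNReal : ℝ≥0∞)).toReal := ENNReal.toReal_mono ENNReal.coe_ne_top hle
    _ = c := by simp [Real.coe_toNNReal c hc]

lemma exists_pos_mulVec_le {B : Matrix m m ℝ} (hB : ∀ i j, 0 ≤ B i j)
    (h : specRad B < 1) :
    ∃ c : ℝ, 0 < c ∧ c < 1 ∧ ∃ v : m → ℝ, (∀ i, 1 ≤ v i) ∧ ∀ i, (B *ᵥ v) i ≤ c * v i := by
  set M : Matrix m m ℂ := B.map (algebraMap ℝ ℂ) with hM
  have hrad0 : 0 ≤ specRad B := ENNReal.toReal_nonneg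
  set c : ℝ := (specRad B + 1) / 2 with hcdef
  have hc0 : 0 < c := by rw [hcdef]; linarith
  have hc1 : c < 1 := by rw [hcdef]; linarith
  have hltc : specRad B < c := by rw [hcdef]; linarith
  have hne : spectralRadius ℂ M ≠ ⊤ :=
    ne_top_of_le_ne_top ENNReal.coe_ne_top (spectrum.spectralRadius_le_nnnorm (𝕜 := ℂ) M)
  have hlt : spectralRadius ℂ M < ENNReal.ofReal c :=
    (ENNReal.lt_ofReal_iff_toReal_lt hne).mpr hltc
  have hev : ∀ᶠ k : ℕ in Filter.atTop,
      ((‖M ^ k‖₊ : ℝ≥0∞)) ^ (1 / (k : ℝ)) < ENNReal.ofReal c :=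
    (spectrum.pow_nnnorm_pow_one_div_tendsto_nhds_spectralRadius M).eventually_lt_const hlt
  obtain ⟨N, hN⟩ := Filter.eventually_atTop.mp hev
  set k := max N 1 with hk
  have hk1 : 1 ≤ k := le_max_right _ _
  have hkR : (0 : ℝ) < (k : ℝ) := by exact_mod_cast hk1.trans_lt' zero_lt_one
  have hkey : (‖M ^ k‖₊ : ℝ≥0∞) < ENNReal.ofReal (c ^ k) := by
    have h1 := hN k (le_max_left _ _)
    have h2 := ENNReal.rpow_lt_rpow h1 hkR
    rwa [← ENNReal.rpow_mul, one_div, inv_mul_cancel₀ (ne_of_gt hkR), ENNReal.rpow_one,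
      ENNReal.ofReal_rpow_of_pos hc0, Real.rpow_natCast] at h2
  have hnormlt : ‖M ^ k‖ < c ^ k := by
    have h1 := (ENNReal.lt_ofReal_iff_toReal_lt ENNReal.coe_ne_top).mp hkey
    simpa using h1
  have hrow : ∀ i, ∑ j, (B ^ k) i j ≤ c ^ k := by
    intro i
    have h1 : (∑ j, ‖(M ^ k) i j‖₊) ≤ ‖M ^ k‖₊ := by
      rw [Matrix.linfty_opNNNorm_def]
      exact Finset.le_sup (f := fun i => ∑ j, ‖(M ^ k) i j‖₊) (Finset.mem_univ i)
    have h2 : ∑ j, ‖(M ^ k) i j‖ ≤ ‖M ^ k‖ := by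
      have h2' := NNReal.coe_le_coe.mpr h1
      push_cast at h2'
      exact h2'
    have h3 : ∀ j, ‖(M ^ k) i j‖ = (B ^ k) i j := by
      intro j
      rw [hM, ← map_pow', Matrix.map_apply]
      simp only [Complex.coe_algebraMap, Complex.norm_real]
      exact abs_of_nonneg (pow_entry_nonneg hB k i j)
    calc ∑ j, (B ^ k) i j = ∑ j, ‖(M ^ k) i j‖ :=
          (Finset.sum_congr rfl fun j _ => (h3 j).symm)
      _ ≤ ‖M ^ k‖ := h2
      _ ≤ c ^ k := hnormlt.le
  set g : ℕ → m → ℝ := fun r => (B ^ r) *ᵥ (fun _ => 1) with hg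
  have hg_nonneg : ∀ r i, 0 ≤ g r i := by
    intro r i
    rw [hg]
    exact Finset.sum_nonneg fun j _ => mul_nonneg (pow_entry_nonneg hB r i j) zero_le_one
  have hg0 : ∀ i, g 0 i = 1 := by
    intro i; rw [hg]; simp
  have hgrow : ∀ i, g k i ≤ c ^ k := by
    intro i
    rw [hg]
    simpa [Matrix.mulVec, dotProduct] using hrow i
  have hgsucc : ∀ r, B *ᵥ g r = g (r + 1) := by
    intro r
    rw [hg]
    simp only [Matrix.mulVec_mulVec]
    rw [← pow_succ']
  set v : m → ℝ := ∑ r ∈ Finset.range k, (c⁻¹) ^ r • g r with hv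
  have hvi : ∀ i, v i = ∑ r ∈ Finset.range k, (c⁻¹) ^ r * g r i := by
    intro i; rw [hv]; simp [Finset.sum_apply]
  have hv1 : ∀ i, 1 ≤ v i := by
    intro i
    rw [hvi]
    have h0 : (c⁻¹) ^ 0 * g 0 i = 1 := by simp [hg0]
    calc (1 : ℝ) = (c⁻¹) ^ 0 * g 0 i := h0.symm
      _ ≤ ∑ r ∈ Finset.range k, (c⁻¹) ^ r * g r i :=
          Finset.single_le_sum (f := fun r => (c⁻¹) ^ r * g r i)
            (fun r _ => mul_nonneg (by positivity) (hg_nonneg r i))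
            (Finset.mem_range.mpr hk1)
  refine ⟨c, hc0, hc1, v, hv1, fun i => ?_⟩
  have hlin : B *ᵥ v = ∑ r ∈ Finset.range k, (c⁻¹) ^ r • g (r + 1) := by
    rw [hv, ← Matrix.mulVecLin_apply, map_sum]
    refine Finset.sum_congr rfl fun r _ => ?_
    rw [LinearMap.map_smul, Matrix.mulVecLin_apply, hgsucc r]
  have hBvi : (B *ᵥ v) i = ∑ r ∈ Finset.range k, (c⁻¹) ^ r * g (r + 1) i := by
    rw [hlin]; simp [Finset.sum_apply]
  rw [hBvi]
  have hrw : ∀ r, (c⁻¹) ^ r * g (r + 1) i = c * ((c⁻¹) ^ (r + 1) * g (r + 1) i) := by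
    intro r
    rw [pow_succ', ← mul_assoc, ← mul_assoc, mul_inv_cancel₀ hc0.ne', one_mul]
  rw [Finset.sum_congr rfl fun r _ => hrw r, ← Finset.mul_sum]
  apply mul_le_mul_of_nonneg_left _ hc0.le
  have hs : ∑ r ∈ Finset.range k, (c⁻¹) ^ (r + 1) * g (r + 1) i
      = (∑ r ∈ Finset.range (k + 1), (c⁻¹) ^ r * g r i) - 1 := by
    rw [Finset.sum_range_succ' (fun r => (c⁻¹) ^ r * g r i) k]
    simp [hg0]
  rw [hs, Finset.sum_range_succ, ← hvi]
  have hfk : (c⁻¹) ^ k * g k i ≤ 1 := by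
    calc (c⁻¹) ^ k * g k i ≤ (c⁻¹) ^ k * c ^ k :=
          mul_le_mul_of_nonneg_left (hgrow i) (by positivity)
      _ = 1 := by rw [← mul_pow, inv_mul_cancel₀ hc0.ne', one_pow]
  linarith

end SpecRadAux

section DelayBlock

variable {n L : ℕ} (A : Fin (L + 1) → Matrix (Fin n) (Fin n) ℝ)

lemma delayBlock_nonneg (hA : ∀ ℓ i j, 0 ≤ A ℓ i j) :
    ∀ p q, 0 ≤ delayBlock A p q := by
  intro p q
  unfold delayBlock
  split
  · exact hA _ _ _
  · split <;> norm_num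

lemma delayBlock_mulVec_zero (w : Fin n × Fin (L + 1) → ℝ)
    (i : Fin n) (m0 : Fin (L + 1)) (hm : (m0 : ℕ) = 0) :
    (delayBlock A *ᵥ w) (i, m0) = ∑ ℓ, ∑ j, A ℓ i j * w (j, ℓ) := by
  rw [Matrix.mulVec, dotProduct, Fintype.sum_prod_type, Finset.sum_comm]
  refine Finset.sum_congr rfl fun ℓ _ => Finset.sum_congr rfl fun j _ => ?_
  unfold delayBlock
  simp [hm]

lemma delayBlock_mulVec_succ (w : Fin n × Fin (L + 1) → ℝ)
    (i : Fin n) (m0 m1 : Fin (L + 1)) (hm : (m1 : ℕ) + 1 = (m0 : ℕ)) :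
    (delayBlock A *ᵥ w) (i, m0) = w (i, m1) := by
  rw [Matrix.mulVec, dotProduct]
  have hkey : ∀ q : Fin n × Fin (L + 1),
      delayBlock A (i, m0) q = if q = (i, m1) then 1 else 0 := by
    intro q
    unfold delayBlock
    rw [if_neg (show ¬ (((i, m0).2 : Fin (L+1)) : ℕ) = 0 by simp only; omega)]
    by_cases hq : q = (i, m1)
    · subst hq
      rw [if_pos ⟨rfl, hm⟩, if_pos rfl]
    · rw [if_neg, if_neg hq]
      rintro ⟨h1, h2⟩
      have h2' : (q.2 : ℕ) + 1 = (m0 : ℕ) := h2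
      have hq2 : q.2 = m1 := Fin.ext (by omega)
      exact hq (Prod.ext h1.symm hq2)
  rw [Finset.sum_congr rfl fun q _ => by rw [hkey q]]
  simp

lemma sum_mulVec_formula (v : Fin n → ℝ) (i : Fin n) :
    ((∑ ℓ, A ℓ) *ᵥ v) i = ∑ ℓ, ∑ j, A ℓ i j * v j := by
  rw [Matrix.mulVec, dotProduct]
  simp only [Matrix.sum_apply, Finset.sum_mul]
  exact Finset.sum_comm

end DelayBlock

theorem stmt0 {n L : ℕ} (hn : 1 ≤ n)
    (A : Fin (L + 1) → Matrix (Fin n) (Fin n) ℝ)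
    (hA : ∀ ℓ i j, 0 ≤ A ℓ i j) :
    specRad (delayBlock A) < 1 ↔ specRad (∑ ℓ, A ℓ) < 1 := by
  have hn' : Nonempty (Fin n) := ⟨⟨0, hn⟩⟩
  have h𝒜 : ∀ p q, 0 ≤ delayBlock A p q := delayBlock_nonneg A hA
  have hS : ∀ i j, 0 ≤ (∑ ℓ, A ℓ) i j := by
    intro i j
    rw [Matrix.sum_apply]
    exact Finset.sum_nonneg fun ℓ _ => hA ℓ i j
  constructor
  · intro h
    obtain ⟨c, hc0, hc1, w, hw1, hw⟩ := SpecRadAux.exists_pos_mulVec_le h𝒜 h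
    have hchain : ∀ (s : ℕ) (hs : s < L + 1) (i : Fin n),
        w (i, ⟨0, Nat.succ_pos L⟩) ≤ w (i, ⟨s, hs⟩) := by
      intro s
      induction s with
      | zero => intro hs i; exact le_rfl
      | succ t ih =>
        intro hs i
        have ht : t < L + 1 := by omega
        have hstep : w (i, ⟨t, ht⟩) ≤ w (i, ⟨t + 1, hs⟩) := by
          have h1 := hw (i, ⟨t + 1, hs⟩)
          rw [delayBlock_mulVec_succ A w i ⟨t + 1, hs⟩ ⟨t, ht⟩ rfl] at h1
          calc w (i, ⟨t, ht⟩) ≤ c * w (i, ⟨t + 1, hs⟩) := h1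
            _ ≤ 1 * w (i, ⟨t + 1, hs⟩) :=
                mul_le_mul_of_nonneg_right hc1.le (le_trans zero_le_one (hw1 _))
            _ = w (i, ⟨t + 1, hs⟩) := one_mul _
        exact le_trans (ih ht i) hstep
    set v : Fin n → ℝ := fun i => w (i, ⟨0, Nat.succ_pos L⟩) with hvdef
    have key : ∀ i, ((∑ ℓ, A ℓ) *ᵥ v) i ≤ c * v i := by
      intro i
      rw [sum_mulVec_formula A v i]
      have h1 : ∑ ℓ, ∑ j, A ℓ i j * v j ≤ ∑ ℓ, ∑ j, A ℓ i j * w (j, ℓ) := by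
        refine Finset.sum_le_sum fun ℓ _ => Finset.sum_le_sum fun j _ => ?_
        exact mul_le_mul_of_nonneg_left (hchain (ℓ : ℕ) ℓ.isLt j) (hA ℓ i j)
      have h2 : ∑ ℓ, ∑ j, A ℓ i j * w (j, ℓ)
          = (delayBlock A *ᵥ w) (i, ⟨0, Nat.succ_pos L⟩) :=
        (delayBlock_mulVec_zero A w i ⟨0, Nat.succ_pos L⟩ rfl).symm
      calc ∑ ℓ, ∑ j, A ℓ i j * v j ≤ ∑ ℓ, ∑ j, A ℓ i j * w (j, ℓ) := h1
        _ = (delayBlock A *ᵥ w) (i, ⟨0, Nat.succ_pos L⟩) := h2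
        _ ≤ c * w (i, ⟨0, Nat.succ_pos L⟩) := hw _
        _ = c * v i := rfl
    have hfin := SpecRadAux.specRad_le_of_mulVec_le hS
      (fun i => lt_of_lt_of_le zero_lt_one (hw1 (i, ⟨0, Nat.succ_pos L⟩))) hc0.le key
    exact lt_of_le_of_lt hfin hc1
  · intro h
    obtain ⟨c, hc0, hc1, v, hv1, hv⟩ := SpecRadAux.exists_pos_mulVec_le hS h
    set d : ℝ := c ^ ((1 : ℝ) / (L + 1)) with hddef
    have hd0 : 0 < d := Real.rpow_pos_of_pos hc0 _
    have hd1 : d < 1 := Real.rpow_lt_one hc0.le hc1 (by positivity)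
    have hLne : ((L : ℝ) + 1) ≠ 0 := by positivity
    have hdpow : d ^ (L + 1) = c := by
      rw [hddef, ← Real.rpow_natCast (c ^ ((1 : ℝ) / (L + 1))) (L + 1),
        ← Real.rpow_mul hc0.le]
      push_cast
      rw [one_div, inv_mul_cancel₀ hLne, Real.rpow_one]
    have hdinv : 1 ≤ d⁻¹ := (one_le_inv₀ hd0).mpr hd1.le
    set w : Fin n × Fin (L + 1) → ℝ := fun p => (d⁻¹) ^ (p.2 : ℕ) * v p.1 with hwdef
    have hw0 : ∀ p, 0 < w p := by
      intro p
      exact mul_pos (by positivity) (lt_of_lt_of_le zero_lt_one (hv1 _))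
    have key : ∀ p, (delayBlock A *ᵥ w) p ≤ d * w p := by
      rintro ⟨i, m0⟩
      by_cases hm : (m0 : ℕ) = 0
      · rw [delayBlock_mulVec_zero A w i m0 hm]
        have step1 : ∑ ℓ, ∑ j, A ℓ i j * w (j, ℓ)
            ≤ (d⁻¹) ^ L * ∑ ℓ, ∑ j, A ℓ i j * v j := by
          rw [Finset.mul_sum]
          refine Finset.sum_le_sum fun ℓ _ => ?_
          rw [Finset.mul_sum]
          refine Finset.sum_le_sum fun j _ => ?_
          have hle : (d⁻¹) ^ (ℓ : ℕ) ≤ (d⁻¹) ^ L :=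
            pow_le_pow_right₀ hdinv (Nat.lt_succ_iff.mp ℓ.isLt)
          calc A ℓ i j * w (j, ℓ) = (d⁻¹) ^ (ℓ : ℕ) * (A ℓ i j * v j) := by
                rw [hwdef]; ring
            _ ≤ (d⁻¹) ^ L * (A ℓ i j * v j) :=
                mul_le_mul_of_nonneg_right hle
                  (mul_nonneg (hA ℓ i j) (le_trans zero_le_one (hv1 j)))
        have step2 : ∑ ℓ, ∑ j, A ℓ i j * v j ≤ c * v i := by
          rw [← sum_mulVec_formula A v i]; exact hv i
        have step3 : (d⁻¹) ^ L * (c * v i) = d * v i := by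
          have : (d⁻¹) ^ L * c = d := by
            rw [← hdpow, pow_succ, ← mul_assoc, ← mul_pow, inv_mul_cancel₀ hd0.ne',
              one_pow, one_mul]
          rw [← mul_assoc, this]
        have hwm : w (i, m0) = v i := by
          rw [hwdef]; simp [hm]
        calc ∑ ℓ, ∑ j, A ℓ i j * w (j, ℓ)
            ≤ (d⁻¹) ^ L * ∑ ℓ, ∑ j, A ℓ i j * v j := step1
          _ ≤ (d⁻¹) ^ L * (c * v i) :=
              mul_le_mul_of_nonneg_left step2 (by positivity)
          _ = d * v i := step3
          _ = d * w (i, m0) := by rw [hwm]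
      · obtain ⟨s, hs⟩ : ∃ s, (m0 : ℕ) = s + 1 := ⟨(m0 : ℕ) - 1, by omega⟩
        have hsl : s < L + 1 := by omega
        rw [delayBlock_mulVec_succ A w i m0 ⟨s, hsl⟩ (by simp [hs])]
        apply le_of_eq
        rw [hwdef]
        simp only
        rw [hs, pow_succ', ← mul_assoc, ← mul_assoc, mul_inv_cancel₀ hd0.ne', one_mul]
    have hfin := SpecRadAux.specRad_le_of_mulVec_le h𝒜 hw0 hd0.le key
    exact lt_of_le_of_lt hfin hd1
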